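/- Let m ≥ 1, let B_1, …, B_m be n × n real matrices, let B_max ≥ max_i ‖B_i‖_F with B_max > 0, let 0 < c ≤ 1/2 and 0 < ε ≤ 1, and let λ ∈ ℝ satisfy |λ| ≤ c√ε / (m · B_max). Then the product of residual factors is ε-close in Frobenius norm to its first-order expansion: ‖ (I + λB_1)(I + λB_2)⋯(I + λB_m) − (I + λ(B_1 + B_2 + ⋯ + B_m)) ‖_F ≤ ε. -/

import Mathlib

/-- The Frobenius norm of a real square matrix. -/
noncomputable def frobeniusNorm {n : ℕ} (M : Matrix (Fin n) (Fin n) ℝ) : ℝ :=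
  Real.sqrt (∑ i, ∑ j, (M i j) ^ 2)

section Aux

attribute [local instance] Matrix.frobeniusSeminormedAddCommGroup
  Matrix.frobeniusNormedAddCommGroup Matrix.frobeniusNormedRing

lemma frobeniusNorm_eq_norm {n : ℕ} (M : Matrix (Fin n) (Fin n) ℝ) :
    frobeniusNorm M = ‖M‖ := by
  rw [Matrix.frobenius_norm_def, frobeniusNorm, Real.sqrt_eq_rpow]
  norm_num [Real.norm_eq_abs, Real.rpow_natCast, sq_abs]

variable {A : Type*} [NormedRing A]

lemma list_sum_norm_le (t : ℝ) :
    ∀ (l : List A), (∀ b ∈ l, ‖b‖ ≤ t) → ‖l.sum‖ ≤ l.length * t := by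
  intro l
  induction l with
  | nil => simp
  | cons a l ih =>
    intro h
    simp only [List.sum_cons, List.length_cons]
    calc ‖a + l.sum‖ ≤ ‖a‖ + ‖l.sum‖ := norm_add_le _ _
      _ ≤ t + l.length * t := by
          gcongr
          · exact h a (List.mem_cons_self)
          · exact ih fun b hb => h b (List.mem_cons_of_mem _ hb)
      _ = ((l.length : ℝ) + 1) * t := by ring
      _ = ((l.length + 1 : ℕ) : ℝ) * t := by push_cast; ring

lemma prod_one_add_sub_le (t : ℝ) (ht : 0 ≤ t) :
    ∀ (l : List A), (∀ b ∈ l, ‖b‖ ≤ t) →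
      ‖(l.map (fun b => 1 + b)).prod - (1 + l.sum)‖
        ≤ (1 + t) ^ l.length - 1 - l.length * t := by
  intro l
  induction l with
  | nil => simp
  | cons a l ih =>
    intro h
    have ha : ‖a‖ ≤ t := h a (List.mem_cons_self)
    have hl : ∀ b ∈ l, ‖b‖ ≤ t := fun b hb => h b (List.mem_cons_of_mem _ hb)
    have hsum : ‖l.sum‖ ≤ l.length * t := list_sum_norm_le t l hl
    have hE := ih hl
    set P := (l.map (fun b => 1 + b)).prod with hP
    set E := P - (1 + l.sum) with hEdef
    have key : ((a :: l).map (fun b => 1 + b)).prod - (1 + (a :: l).sum)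
        = E + a * l.sum + a * E := by
      simp only [List.map_cons, List.prod_cons, List.sum_cons, ← hP]
      have hPe : P = 1 + l.sum + E := by rw [hEdef]; abel
      rw [hPe]; noncomm_ring
    rw [key]
    have h1t : (0:ℝ) ≤ 1 + t := by linarith
    calc ‖E + a * l.sum + a * E‖ ≤ ‖E + a * l.sum‖ + ‖a * E‖ := norm_add_le _ _
      _ ≤ ‖E‖ + ‖a * l.sum‖ + ‖a * E‖ := by gcongr; exact norm_add_le _ _
      _ ≤ ‖E‖ + ‖a‖ * ‖l.sum‖ + ‖a‖ * ‖E‖ := by gcongr <;> exact norm_mul_le _ _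
      _ ≤ ((1 + t) ^ l.length - 1 - l.length * t) + t * (l.length * t)
            + t * ((1 + t) ^ l.length - 1 - l.length * t) := by
          gcongr <;> first
            | exact hE
            | exact ha
            | exact hsum
            | positivity
            | exact norm_nonneg _
      _ = (1 + t) ^ (l.length + 1) - 1 - (l.length + 1) * t := by
          rw [pow_succ]; ring
      _ = (1 + t) ^ (a :: l).length - 1 - (a :: l).length * t := by
          simp only [List.length_cons]; push_cast; ring
  
end Aux

theorem flat_butterfly_approx (n m : ℕ) (hm : 1 ≤ m)
    (B : Fin m → Matrix (Fin n) (Fin n) ℝ)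
    (Bmax : ℝ) (hBmax : 0 < Bmax) (hB : ∀ i, frobeniusNorm (B i) ≤ Bmax)
    (c ε lam : ℝ) (hc : 0 < c) (hc' : c ≤ 1 / 2) (hε : 0 < ε) (hε' : ε ≤ 1)
    (hlam : |lam| ≤ c * Real.sqrt ε / (m * Bmax)) :
    frobeniusNorm
      ((List.ofFn fun i => (1 : Matrix (Fin n) (Fin n) ℝ) + lam • B i).prod
        - ((1 : Matrix (Fin n) (Fin n) ℝ) + lam • ∑ i, B i)) ≤ ε := by
  classical
  letI := Matrix.frobeniusSeminormedAddCommGroup (α := ℝ) (m := Fin n) (n := Fin n)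
  letI := Matrix.frobeniusNormedRing (α := ℝ) (m := Fin n)
  letI := Matrix.frobeniusNormSMulClass (R := ℝ) (α := ℝ) (m := Fin n) (n := Fin n)
  set t : ℝ := |lam| * Bmax with htdef
  have ht : 0 ≤ t := mul_nonneg (abs_nonneg _) hBmax.le
  have hεs : Real.sqrt ε ≤ 1 := by
    rw [show (1:ℝ) = Real.sqrt 1 by simp]
    exact Real.sqrt_le_sqrt hε'
  have hx0 : (0:ℝ) < m * Bmax := by
    have : (1:ℝ) ≤ m := by exact_mod_cast hm
    positivity
  have hx : (m : ℝ) * t ≤ c * Real.sqrt ε := by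
    rw [htdef, ← mul_assoc, mul_comm (m:ℝ) |lam|]
    calc |lam| * m * Bmax = |lam| * (m * Bmax) := by ring
      _ ≤ (c * Real.sqrt ε / (m * Bmax)) * (m * Bmax) := by gcongr
      _ = c * Real.sqrt ε := by field_simp
  have hx1 : (m : ℝ) * t ≤ 1 := by
    have : c * Real.sqrt ε ≤ (1/2) * 1 := by
      apply mul_le_mul hc' hεs (Real.sqrt_nonneg _) (by norm_num)
    linarith
  have hxnn : (0:ℝ) ≤ (m : ℝ) * t := by positivity
  -- identify the list
  set l : List (Matrix (Fin n) (Fin n) ℝ) := List.ofFn (fun i => lam • B i) with hl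
  have hmap : (List.ofFn fun i => (1 : Matrix (Fin n) (Fin n) ℝ) + lam • B i)
      = l.map (fun b => 1 + b) := by
    rw [hl, List.map_ofFn]; rfl
  have hsum : l.sum = lam • ∑ i, B i := by
    rw [hl, List.sum_ofFn, ← Finset.smul_sum]
  have hlen : l.length = m := by simp [hl]
  have hmem : ∀ b ∈ l, ‖b‖ ≤ t := by
    intro b hb
    rw [hl, List.mem_ofFn] at hb
    obtain ⟨i, rfl⟩ := hb
    rw [norm_smul, htdef, Real.norm_eq_abs]
    gcongr
    rw [← frobeniusNorm_eq_norm]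
    exact hB i
  have hmain := prod_one_add_sub_le t ht l hmem
  rw [hlen] at hmain
  rw [frobeniusNorm_eq_norm, hmap, ← hsum]
  refine hmain.trans ?_
  -- real-number estimate
  have h1 : (1 + t) ^ m ≤ Real.exp ((m : ℝ) * t) := by
    rw [Real.exp_nat_mul]
    exact pow_le_pow_left₀ (by linarith) (by rw [add_comm]; exact Real.add_one_le_exp t) m
  have h2 : Real.exp ((m : ℝ) * t) ≤ 1 + (m : ℝ) * t + ((m : ℝ) * t) ^ 2 := by
    have := Real.exp_bound' hxnn hx1 (n := 2) (by norm_num)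
    simp [Finset.sum_range_succ] at this
    nlinarith [sq_nonneg ((m:ℝ)*t)]
  have h3 : ((m : ℝ) * t) ^ 2 ≤ ε := by
    have hcs : (0:ℝ) ≤ c * Real.sqrt ε := by positivity
    have : ((m : ℝ) * t) ^ 2 ≤ (c * Real.sqrt ε) ^ 2 := by
      apply pow_le_pow_left₀ hxnn hx
    have hsq : (c * Real.sqrt ε) ^ 2 = c ^ 2 * ε := by
      rw [mul_pow, Real.sq_sqrt hε.le]
    have hc4 : c ^ 2 ≤ 1 / 4 := by nlinarith
    have hc2 : c ^ 2 * ε ≤ (1 / 4) * ε := mul_le_mul_of_nonneg_right hc4 hε.le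
    linarith
  linarith
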